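/- Let (X,d,∘) be a compact topological group with bi-invariant metric d and Haar probability measure μ, let n ≥ 2, and let Tₙ be a maximum n-packing of X. Then for every Borel measurable U ⊆ X: μ(B₋₂₋ₙ₊₂(U)) ≤ μ_{Tₙ}(B₋₂₋ₙ₊₁(U)) ≤ μ(U) ≤ μ_{Tₙ}(B₊₂₋ₙ₊₁(U)) ≤ μ(B₊₂₋ₙ₊₂(U)), where B₋ᵣ and B₊ᵣ denote inner and outer generalized closed balls of radius r = 2^{-n+1} resp. 2^{-n+2}. -/

import Mathlib

open MeasureTheory Metric

/-- Outer generalized closed ball: `{x | d(x,U) ≤ r}`. -/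
def outerBall {X : Type*} [MetricSpace X] (r : ℝ) (U : Set X) : Set X :=
  {x | Metric.infDist x U ≤ r}

/-- Inner generalized closed ball: `{x | d(x,Uᶜ) ≥ r}`. -/
def innerBall {X : Type*} [MetricSpace X] (r : ℝ) (U : Set X) : Set X :=
  {x | r ≤ Metric.infDist x Uᶜ}

/-- `T` is an `n`-packing of `S`: `T ⊆ S` with pairwise distances `> 2^{-n}`. -/
def IsNPacking {X : Type*} [MetricSpace X] (n : ℕ) (S : Set X) (T : Finset X) : Prop :=
  ↑T ⊆ S ∧ (↑T : Set X).Pairwise fun a b => (2 : ℝ) ^ (-(n : ℤ)) < dist a b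

/-- `κ_S(n)`: the maximum cardinality of an `n`-packing of `S`. -/
noncomputable def packingNumber {X : Type*} [MetricSpace X] (S : Set X) (n : ℕ) : ℕ :=
  sSup {k | ∃ T : Finset X, IsNPacking n S T ∧ T.card = k}

/-- Normalized counting measure `μ_T(S) = |T ∩ S| / |T|`. -/
noncomputable def muT {X : Type*} [MetricSpace X] (T : Finset X) (S : Set X) : ENNReal :=
  ((((↑T : Set X) ∩ S).ncard : ENNReal)) / (T.card : ENNReal)

section Aux

variable {X : Type*} [MetricSpace X]

lemma aux_outer_triangle {U A : Set X} {x : X} {r s : ℝ}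
    (hA : A.Nonempty) (hAU : ∀ y ∈ A, infDist y U ≤ s) (hx : infDist x A ≤ r) :
    infDist x U ≤ r + s := by
  refine le_of_forall_pos_le_add fun ε hε => ?_
  obtain ⟨y, hyA, hxy⟩ := (infDist_lt_iff hA).1
    (show infDist x A < r + ε from lt_of_le_of_lt hx (by linarith))
  have h1 : infDist x U ≤ infDist y U + dist x y := infDist_le_infDist_add_dist
  have h2 := hAU y hyA
  linarith

lemma aux_inner_triangle {V A : Set X} {x : X} {r s : ℝ}
    (hA : A.Nonempty) (hAV : ∀ y ∈ A, s ≤ infDist y V) (hx : infDist x A ≤ r) :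
    s - r ≤ infDist x V := by
  refine le_of_forall_pos_le_add fun ε hε => ?_
  obtain ⟨y, hyA, hxy⟩ := (infDist_lt_iff hA).1
    (show infDist x A < r + ε from lt_of_le_of_lt hx (by linarith))
  have h1 : infDist y V ≤ infDist x V + dist y x := infDist_le_infDist_add_dist
  have h2 := hAV y hyA
  rw [dist_comm] at h1
  linarith

lemma aux_bddAbove [CompactSpace X] (n : ℕ) :
    BddAbove {k | ∃ T : Finset X, IsNPacking n Set.univ T ∧ T.card = k} := by
  classical
  obtain ⟨t, -, htf, hcover⟩ :=
    finite_cover_balls_of_compact (isCompact_univ (X := X))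
      (e := (2 : ℝ) ^ (-(n : ℤ)) / 2) (by positivity)
  refine ⟨htf.toFinset.card, ?_⟩
  rintro k ⟨T, hT, rfl⟩
  have hc : ∀ x : X, ∃ c, c ∈ t ∧ dist x c < (2 : ℝ) ^ (-(n : ℤ)) / 2 := by
    intro x
    have := hcover (Set.mem_univ x)
    simpa [Set.mem_iUnion, Metric.mem_ball] using this
  choose f hft hfd using hc
  refine Finset.card_le_card_of_injOn f (fun a _ => htf.mem_toFinset.2 (hft a)) ?_
  intro a ha b hb hfe
  by_contra hne
  have h1 := hT.2 ha hb hne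
  have h2 : dist a b ≤ dist a (f a) + dist b (f b) := by
    rw [hfe]
    calc dist a b ≤ dist a (f b) + dist (f b) b := dist_triangle _ _ _
    _ = dist a (f b) + dist b (f b) := by rw [dist_comm (f b) b]
  have h3 := hfd a
  have h4 := hfd b
  linarith

lemma aux_compare [CompactSpace X] (n : ℕ) (T T' : Finset X)
    (hT : IsNPacking n Set.univ T) (hT' : IsNPacking n Set.univ T')
    (hT'c : T'.card = packingNumber (Set.univ : Set X) n) (A : Set X) :
    ((↑T : Set X) ∩ A).ncard ≤
      ((↑T' : Set X) ∩ {x | infDist x A ≤ (2 : ℝ) ^ (-(n : ℤ))}).ncard := by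
  classical
  set r : ℝ := (2 : ℝ) ^ (-(n : ℤ)) with hr
  have hrpos : 0 < r := by positivity
  set T₁ := T.filter (· ∈ A) with hT₁
  set T₂ := T'.filter (fun x => ¬ infDist x A ≤ r) with hT₂
  set T₃ := T'.filter (fun x => infDist x A ≤ r) with hT₃
  have hcoe1 : ((↑T : Set X) ∩ A) = ↑T₁ := by
    ext x; simp [hT₁]
  have hcoe3 : ((↑T' : Set X) ∩ {x | infDist x A ≤ r}) = ↑T₃ := by
    ext x; simp [hT₃]
  rw [hcoe1, hcoe3, Set.ncard_coe_finset, Set.ncard_coe_finset]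
  have hdisj : Disjoint T₁ T₂ := by
    rw [Finset.disjoint_left]
    intro x hx1 hx2
    have h1 : x ∈ A := (Finset.mem_filter.1 hx1).2
    have h2 : ¬ infDist x A ≤ r := (Finset.mem_filter.1 hx2).2
    exact h2 (by rw [infDist_zero_of_mem h1]; linarith)
  have hpack : IsNPacking n Set.univ (T₁ ∪ T₂) := by
    constructor
    · exact Set.subset_univ _
    · intro a ha b hb hab
      rw [Finset.mem_coe, Finset.mem_union] at ha hb
      rcases ha with ha | ha <;> rcases hb with hb | hb
      · exact hT.2 (Finset.mem_coe.2 (Finset.mem_filter.1 ha).1)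
          (Finset.mem_coe.2 (Finset.mem_filter.1 hb).1) hab
      · have h1 : a ∈ A := (Finset.mem_filter.1 ha).2
        have h2 : ¬ infDist b A ≤ r := (Finset.mem_filter.1 hb).2
        have h3 : infDist b A ≤ dist b a := infDist_le_dist_of_mem h1
        rw [dist_comm]
        push_neg at h2
        linarith
      · have h1 : b ∈ A := (Finset.mem_filter.1 hb).2
        have h2 : ¬ infDist a A ≤ r := (Finset.mem_filter.1 ha).2
        have h3 : infDist a A ≤ dist a b := infDist_le_dist_of_mem h1
        push_neg at h2
        linarith
      · exact hT'.2 (Finset.mem_coe.2 (Finset.mem_filter.1 ha).1)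
          (Finset.mem_coe.2 (Finset.mem_filter.1 hb).1) hab
  have hle : (T₁ ∪ T₂).card ≤ packingNumber (Set.univ : Set X) n :=
    le_csSup (aux_bddAbove n) ⟨T₁ ∪ T₂, hpack, rfl⟩
  rw [Finset.card_union_of_disjoint hdisj] at hle
  have hsplit : T₃.card + T₂.card = T'.card :=
    Finset.card_filter_add_card_filter_not _
  omega

end Aux

section Count

variable {X : Type*} [MetricSpace X] [Group X]

lemma aux_ncard_image [DecidableEq X] (T : Finset X) (g : X) (S : Set X) :
    ((↑(T.image (· * g)) : Set X) ∩ S).ncard = (((↑T : Set X) ∩ {p | p * g ∈ S})).ncard := by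
  classical
  have h : ((↑(T.image (· * g)) : Set X) ∩ S) =
      (· * g) '' ((↑T : Set X) ∩ {p | p * g ∈ S}) := by
    ext x
    simp only [Set.mem_inter_iff, Finset.coe_image, Set.mem_image, Finset.mem_coe,
      Set.mem_setOf_eq]
    constructor
    · rintro ⟨⟨p, hp, rfl⟩, hx⟩; exact ⟨p, ⟨hp, hx⟩, rfl⟩
    · rintro ⟨p, ⟨hp, hx⟩, rfl⟩; exact ⟨⟨p, hp, rfl⟩, hx⟩
  rw [h, Set.ncard_image_of_injective _ (mul_left_injective g)]

lemma aux_image_packing [DecidableEq X]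
    (hbi : ∀ a b c : X, dist (a * c) (b * c) = dist a b ∧ dist (c * a) (c * b) = dist a b)
    (n : ℕ) (T : Finset X) (hT : IsNPacking n Set.univ T) (g : X) :
    IsNPacking n Set.univ (T.image (· * g)) := by
  classical
  refine ⟨Set.subset_univ _, ?_⟩
  intro a ha b hb hab
  simp only [Finset.coe_image, Set.mem_image, Finset.mem_coe] at ha hb
  obtain ⟨p, hp, rfl⟩ := ha
  obtain ⟨q, hq, rfl⟩ := hb
  rw [(hbi p q g).1]
  exact hT.2 (Finset.mem_coe.2 hp) (Finset.mem_coe.2 hq) (fun h => hab (by rw [h]))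

end Count

lemma aux_lintegral {X : Type*} [MetricSpace X] [Group X] [DecidableEq X]
    [IsTopologicalGroup X] [MeasurableSpace X] [BorelSpace X]
    (μ : Measure X) [IsProbabilityMeasure μ] [μ.IsMulLeftInvariant]
    (T : Finset X) (S : Set X) (hS : MeasurableSet S) :
    ∫⁻ g, (((↑(T.image (· * g)) : Set X) ∩ S).ncard : ENNReal) ∂μ = T.card * μ S := by
  classical
  have key : ∀ g : X, (((↑(T.image (· * g)) : Set X) ∩ S).ncard : ENNReal)
      = ∑ p ∈ T, S.indicator (fun _ => (1 : ENNReal)) (p * g) := by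
    intro g
    rw [aux_ncard_image]
    have h2 : ((↑T : Set X) ∩ {p | p * g ∈ S}) = ↑(T.filter (fun p => p * g ∈ S)) := by
      ext x; simp
    rw [h2, Set.ncard_coe_finset, Finset.card_filter]
    push_cast
    refine Finset.sum_congr rfl fun p _ => ?_
    by_cases h : p * g ∈ S <;> simp [h, Set.indicator_apply]
  calc ∫⁻ g, (((↑(T.image (· * g)) : Set X) ∩ S).ncard : ENNReal) ∂μ
      = ∫⁻ g, ∑ p ∈ T, S.indicator (fun _ => (1 : ENNReal)) (p * g) ∂μ := lintegral_congr key
    _ = ∑ p ∈ T, ∫⁻ g, S.indicator (fun _ => (1 : ENNReal)) (p * g) ∂μ :=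
        lintegral_finset_sum _ (fun p _ =>
          (measurable_one.indicator hS).comp (measurable_const_mul p))
    _ = ∑ _p ∈ T, μ S := by
        refine Finset.sum_congr rfl fun p _ => ?_
        rw [show (fun g => S.indicator (fun _ => (1 : ENNReal)) (p * g))
            = fun g => (S.indicator 1) (p * g) from rfl]
        rw [lintegral_mul_left_eq_self (S.indicator 1) p, lintegral_indicator_one hS]
    _ = T.card * μ S := by rw [Finset.sum_const, nsmul_eq_mul]

theorem stmt_2 {X : Type*} [MetricSpace X] [CompactSpace X] [Group X] [IsTopologicalGroup X]
    [MeasurableSpace X] [BorelSpace X]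
    (hbi : ∀ a b c : X, dist (a * c) (b * c) = dist a b ∧ dist (c * a) (c * b) = dist a b)
    (μ : Measure X) [IsProbabilityMeasure μ] [μ.IsMulLeftInvariant] [μ.Regular]
    (n : ℕ) (hn : 2 ≤ n)
    (T : Finset X) (hT : IsNPacking n Set.univ T)
    (hTmax : T.card = packingNumber (Set.univ : Set X) n)
    (U : Set X) (hU : MeasurableSet U) :
    μ (innerBall ((2 : ℝ) ^ (-(n : ℤ) + 2)) U) ≤ muT T (innerBall ((2 : ℝ) ^ (-(n : ℤ) + 1)) U) ∧
    muT T (innerBall ((2 : ℝ) ^ (-(n : ℤ) + 1)) U) ≤ μ U ∧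
    μ U ≤ muT T (outerBall ((2 : ℝ) ^ (-(n : ℤ) + 1)) U) ∧
    muT T (outerBall ((2 : ℝ) ^ (-(n : ℤ) + 1)) U) ≤ μ (outerBall ((2 : ℝ) ^ (-(n : ℤ) + 2)) U) := by
  classical
  set r : ℝ := (2 : ℝ) ^ (-(n : ℤ)) with hr
  set r1 : ℝ := (2 : ℝ) ^ (-(n : ℤ) + 1) with hr1
  set r2 : ℝ := (2 : ℝ) ^ (-(n : ℤ) + 2) with hr2
  have hrpos : 0 < r := by positivity
  have hr1e : r1 = 2 * r := by
    rw [hr1, hr, zpow_add₀ (two_ne_zero), zpow_one]; ring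
  have hr2e : r2 = 4 * r := by
    rw [hr2, hr, zpow_add₀ (two_ne_zero)]; norm_num; ring
  -- T is nonempty
  have hcard : T.card ≠ 0 := by
    have h1 : 1 ≤ packingNumber (Set.univ : Set X) n := by
      refine le_csSup (aux_bddAbove n) ⟨{1}, ⟨Set.subset_univ _, ?_⟩, Finset.card_singleton 1⟩
      simp [Set.Pairwise]
    omega
  -- measurability of the balls
  have hmo : ∀ (s : ℝ) (V : Set X), MeasurableSet (outerBall s V) := fun s V =>
    (isClosed_le (continuous_infDist_pt V) continuous_const).measurableSet
  have hmi : ∀ (s : ℝ) (V : Set X), MeasurableSet (innerBall s V) := fun s V =>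
    (isClosed_le continuous_const (continuous_infDist_pt Vᶜ)).measurableSet
  -- translated packings
  have hTg : ∀ g : X, IsNPacking n Set.univ (T.image (· * g)) :=
    aux_image_packing hbi n T hT
  have hTgc : ∀ g : X, (T.image (· * g)).card = packingNumber (Set.univ : Set X) n :=
    fun g => by rw [Finset.card_image_of_injective _ (mul_left_injective g)]; exact hTmax
  -- monotonicity of counts
  have hmono : ∀ (T' : Finset X) (A B : Set X), A ⊆ B →
      ((↑T' : Set X) ∩ A).ncard ≤ ((↑T' : Set X) ∩ B).ncard :=
    fun T' A B h => Set.ncard_le_ncard (Set.inter_subset_inter_right _ h)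
      (T'.finite_toSet.inter_of_left B)
  -- main upper-bound principle
  have main_ub : ∀ (S B : Set X), MeasurableSet S →
      (∀ g : X, (((↑(T.image (· * g)) : Set X) ∩ S).ncard) ≤ ((↑T : Set X) ∩ B).ncard) →
      μ S ≤ muT T B := by
    intro S B hS h
    have h1 : (T.card : ENNReal) * μ S ≤ (((↑T : Set X) ∩ B).ncard : ENNReal) := by
      rw [← aux_lintegral μ T S hS]
      calc ∫⁻ g, (((↑(T.image (· * g)) : Set X) ∩ S).ncard : ENNReal) ∂μ
          ≤ ∫⁻ _, (((↑T : Set X) ∩ B).ncard : ENNReal) ∂μ :=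
            lintegral_mono fun g => Nat.cast_le.2 (h g)
        _ = (((↑T : Set X) ∩ B).ncard : ENNReal) := by simp
    rw [muT, ENNReal.le_div_iff_mul_le
      (Or.inl (by exact_mod_cast hcard)) (Or.inl (ENNReal.natCast_ne_top _)), mul_comm]
    exact h1
  -- main lower-bound principle
  have main_lb : ∀ (S B : Set X), MeasurableSet S →
      (∀ g : X, ((↑T : Set X) ∩ B).ncard ≤ (((↑(T.image (· * g)) : Set X) ∩ S).ncard)) →
      muT T B ≤ μ S := by
    intro S B hS h
    have h1 : ((((↑T : Set X) ∩ B).ncard : ENNReal)) ≤ (T.card : ENNReal) * μ S := by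
      rw [← aux_lintegral μ T S hS]
      calc (((↑T : Set X) ∩ B).ncard : ENNReal)
          = ∫⁻ _, (((↑T : Set X) ∩ B).ncard : ENNReal) ∂μ := by simp
        _ ≤ ∫⁻ g, (((↑(T.image (· * g)) : Set X) ∩ S).ncard : ENNReal) ∂μ :=
            lintegral_mono fun g => Nat.cast_le.2 (h g)
    rw [muT, ENNReal.div_le_iff_le_mul
      (Or.inl (by exact_mod_cast hcard)) (Or.inl (ENNReal.natCast_ne_top _)), mul_comm]
    exact h1
  refine ⟨?_, ?_, ?_, ?_⟩
  · -- μ (innerBall r2 U) ≤ muT T (innerBall r1 U)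
    refine main_ub _ _ (hmi r2 U) fun g => ?_
    by_cases hA : (innerBall r2 U).Nonempty
    · refine le_trans (aux_compare n (T.image (· * g)) T (hTg g) hT hTmax _) ?_
      refine hmono T _ _ fun x hx => ?_
      have h2 := aux_inner_triangle hA (fun y hy => hy) hx
      have : r1 ≤ infDist x Uᶜ := by rw [hr1e]; rw [hr2e] at h2; linarith
      exact this
    · rw [Set.not_nonempty_iff_eq_empty.1 hA]
      simp
  · -- muT T (innerBall r1 U) ≤ μ U
    refine main_lb _ _ hU fun g => ?_
    by_cases hA : (innerBall r1 U).Nonempty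
    · refine le_trans (aux_compare n T (T.image (· * g)) hT (hTg g) (hTgc g) _) ?_
      refine hmono _ _ _ fun x hx => ?_
      have h2 := aux_inner_triangle hA (fun y hy => hy) hx
      have h3 : 0 < infDist x Uᶜ := by rw [hr1e] at h2; linarith
      by_contra hxU
      have hxc : x ∈ Uᶜ := hxU
      rw [infDist_zero_of_mem hxc] at h3
      exact lt_irrefl _ h3
    · rw [Set.not_nonempty_iff_eq_empty.1 hA]
      simp
  · -- μ U ≤ muT T (outerBall r1 U)
    refine main_ub _ _ hU fun g => ?_
    refine le_trans (aux_compare n (T.image (· * g)) T (hTg g) hT hTmax _) ?_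
    refine hmono T _ _ fun x hx => ?_
    have : infDist x U ≤ r1 := le_trans hx (by rw [hr1e]; linarith)
    exact this
  · -- muT T (outerBall r1 U) ≤ μ (outerBall r2 U)
    refine main_lb _ _ (hmo r2 U) fun g => ?_
    by_cases hA : (outerBall r1 U).Nonempty
    · refine le_trans (aux_compare n T (T.image (· * g)) hT (hTg g) (hTgc g) _) ?_
      refine hmono _ _ _ fun x hx => ?_
      have h2 := aux_outer_triangle hA (fun y hy => hy) hx
      have : infDist x U ≤ r2 := by rw [hr2e]; rw [hr1e] at h2; linarith
      exact this
    · rw [Set.not_nonempty_iff_eq_empty.1 hA]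
      simp
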